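/- Let A be an f-adic ring and let γ : A → Â be the canonical map to its completion. If A⁺ is an open subring of A contained in A° and integrally closed in A, then cl(γ(A⁺)), the topological closure of γ(A⁺) in Â, is an open subring of Â contained in (Â)° and integrally closed in Â. -/

import Mathlib

open Filter Topology

/-- A subset `S` of a topological ring is bounded if for every neighbourhood `U` of `0`
there is a neighbourhood `V` of `0` with `V · S ⊆ U`. -/
def IsBoundedSubset {A : Type*} [CommRing A] [TopologicalSpace A] (S : Set A) : Prop :=
  ∀ U ∈ 𝓝 (0 : A), ∃ V ∈ 𝓝 (0 : A), ∀ v ∈ V, ∀ s ∈ S, v * s ∈ U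

/-- An element of a topological ring is power-bounded if the set of its powers `aⁿ`, `n ≥ 1`,
is bounded. -/
def IsPowerBounded {A : Type*} [CommRing A] [TopologicalSpace A] (a : A) : Prop :=
  IsBoundedSubset {x : A | ∃ n : ℕ, 1 ≤ n ∧ x = a ^ n}

/-- `A°`, the set of power-bounded elements of a topological ring. -/
def powerBounded (A : Type*) [CommRing A] [TopologicalSpace A] : Set A :=
  {a : A | IsPowerBounded a}

/-- `I₀` is an ideal of definition of the subring `A₀` of the topological ring `A` if it is
finitely generated and its powers form a basis of neighbourhoods of `0` in `A`. -/
def IsIdealOfDefinition {A : Type*} [CommRing A] [TopologicalSpace A]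
    (A₀ : Subring A) (I₀ : Ideal A₀) : Prop :=
  I₀.FG ∧ (𝓝 (0 : A)).HasBasis (fun n : ℕ => 1 ≤ n)
    (fun n => ⇑A₀.subtype '' ((I₀ ^ n : Ideal A₀) : Set A₀))

/-- A ring of definition of a topological ring is an open subring admitting an ideal of
definition. -/
def IsRingOfDefinition {A : Type*} [CommRing A] [TopologicalSpace A] (A₀ : Subring A) : Prop :=
  IsOpen (A₀ : Set A) ∧ ∃ I₀ : Ideal A₀, IsIdealOfDefinition A₀ I₀

/-- A topological commutative ring is f-adic if it admits a ring of definition. -/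
def IsFAdic (A : Type*) [CommRing A] [TopologicalSpace A] : Prop :=
  ∃ A₀ : Subring A, IsRingOfDefinition A₀

/-- A subring `S` of `A` is integrally closed in `A` if every element of `A` integral
over `S` lies in `S`. -/
def IsIntegrallyClosedSubring {A : Type*} [CommRing A] (S : Subring A) : Prop :=
  ∀ x : A, IsIntegral S x → x ∈ S

private lemma mulClosure' {R : Type*} [CommRing R] [TopologicalSpace R] [IsTopologicalRing R]
    {X Y Z : Set R} (hZ : IsClosed Z) (h : ∀ x ∈ X, ∀ y ∈ Y, x * y ∈ Z) :
    ∀ x ∈ closure X, ∀ y ∈ closure Y, x * y ∈ Z := by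
  have step1 : ∀ x ∈ X, ∀ y ∈ closure Y, x * y ∈ Z := by
    intro x hx y hy
    exact closure_minimal (fun y hy => h x hx y hy)
      (hZ.preimage (continuous_const.mul continuous_id)) hy
  intro x hx y hy
  exact closure_minimal (fun x hx => step1 x hx y hy)
    (hZ.preimage (continuous_id.mul continuous_const)) hx

theorem statement11 {A : Type*} [CommRing A] [UniformSpace A] [IsUniformAddGroup A]
    [IsTopologicalRing A] (hA : IsFAdic A)
    (γ : A →+* UniformSpace.Completion A)
    (hγ : γ = UniformSpace.Completion.coeRingHom)
    (Aplus : Subring A) (hopen : IsOpen (Aplus : Set A))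
    (hpb : (Aplus : Set A) ⊆ powerBounded A)
    (hic : IsIntegrallyClosedSubring Aplus) :
    IsOpen (((Aplus.map γ).topologicalClosure : Subring (UniformSpace.Completion A)) :
        Set (UniformSpace.Completion A)) ∧
    (((Aplus.map γ).topologicalClosure : Subring (UniformSpace.Completion A)) :
        Set (UniformSpace.Completion A)) ⊆ powerBounded (UniformSpace.Completion A) ∧
    IsIntegrallyClosedSubring (Aplus.map γ).topologicalClosure := by
  obtain ⟨A₀, hA₀open, I₀, hfg, hbasis⟩ := hA
  have hdi : IsDenseInducing ⇑γ := by
    rw [hγ]; exact UniformSpace.Completion.isDenseInducing_coe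
  have hdr : DenseRange ⇑γ := hdi.dense
  have hγcont : Continuous ⇑γ := by rw [hγ]; exact UniformSpace.Completion.continuous_coeRingHom
  set S : ℕ → Set A := fun n => ⇑A₀.subtype '' ((I₀ ^ n : Ideal A₀) : Set A₀) with hSdef
  have hSmem : ∀ n, 1 ≤ n → S n ∈ 𝓝 (0 : A) := fun n hn => hbasis.mem_of_mem hn
  have hSsub : ∀ U ∈ 𝓝 (0 : A), ∃ n, 1 ≤ n ∧ S n ⊆ U := by
    intro U hU
    obtain ⟨n, hn, h⟩ := hbasis.mem_iff.mp hU
    exact ⟨n, hn, h⟩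
  have hS0 : ∀ n, (0 : A) ∈ S n := fun n => ⟨0, zero_mem _, map_zero _⟩
  have hSmul : ∀ m n, ∀ x ∈ S m, ∀ y ∈ S n, x * y ∈ S (m + n) := by
    rintro m n x ⟨x₀, hx₀, rfl⟩ y ⟨y₀, hy₀, rfl⟩
    exact ⟨x₀ * y₀, by rw [pow_add]; exact Ideal.mul_mem_mul hx₀ hy₀, map_mul _ _ _⟩
  have hSmono : ∀ m n, n ≤ m → S m ⊆ S n := by
    rintro m n h x ⟨x₀, hx₀, rfl⟩
    exact ⟨x₀, Ideal.pow_le_pow_right h hx₀, rfl⟩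
  set W : ℕ → Set (UniformSpace.Completion A) := fun n => closure (⇑γ '' S n) with hWdef
  have hWclosed : ∀ n, IsClosed (W n) := fun n => isClosed_closure
  have hWmem : ∀ n, 1 ≤ n → W n ∈ 𝓝 (0 : UniformSpace.Completion A) := fun n hn => by
    have := hdi.closure_image_mem_nhds (hSmem n hn)
    rwa [map_zero] at this
  have hWsub : ∀ U ∈ 𝓝 (0 : UniformSpace.Completion A), ∃ n, 1 ≤ n ∧ W n ⊆ U := by
    intro U hU
    obtain ⟨C, ⟨hC, hCc⟩, hCU⟩ := (closed_nhds_basis (0 : UniformSpace.Completion A)).mem_iff.mp hU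
    have hpre : ⇑γ ⁻¹' C ∈ 𝓝 (0 : A) := by
      apply hγcont.continuousAt.preimage_mem_nhds
      rwa [map_zero]
    obtain ⟨n, hn, hsub⟩ := hSsub _ hpre
    refine ⟨n, hn, le_trans (closure_minimal ?_ hCc) hCU⟩
    rintro _ ⟨a, ha, rfl⟩
    exact hsub ha
  have hWgrp : ∀ n, ∃ G : AddSubgroup (UniformSpace.Completion A), (G : Set _) = W n := by
    intro n
    refine ⟨(((I₀ ^ n).toAddSubgroup.map A₀.subtype.toAddMonoidHom).map
      γ.toAddMonoidHom).topologicalClosure, ?_⟩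
    rw [AddSubgroup.topologicalClosure_coe]
    simp only [AddSubgroup.coe_map, Submodule.coe_toAddSubgroup]
    rfl
  have hWmul : ∀ m n, ∀ x ∈ W m, ∀ y ∈ W n, x * y ∈ W (m + n) := by
    intro m n
    refine mulClosure' (hWclosed (m + n)) ?_
    rintro _ ⟨a, ha, rfl⟩ _ ⟨b, hb, rfl⟩
    rw [← map_mul]
    exact subset_closure ⟨a * b, hSmul m n a ha b hb, rfl⟩
  have hWmulg : ∀ (a : A) (s t : ℕ), (∀ v ∈ S s, v * a ∈ S t) →
      ∀ x ∈ W s, x * γ a ∈ W t := by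
    intro a s t h x hx
    refine mulClosure' (Y := {γ a}) (hWclosed t) ?_ x hx (γ a) (subset_closure rfl)
    rintro _ ⟨v, hv, rfl⟩ y hy
    rw [Set.mem_singleton_iff] at hy
    subst hy
    rw [← map_mul]
    exact subset_closure ⟨v * a, h v hv, rfl⟩
  have hWmono : ∀ m n, n ≤ m → W m ⊆ W n := fun m n h =>
    closure_mono (Set.image_mono (hSmono m n h))
  have hBcoe : (((Aplus.map γ).topologicalClosure : Subring (UniformSpace.Completion A)) :
      Set (UniformSpace.Completion A)) = closure (⇑γ '' (Aplus : Set A)) := rfl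
  refine ⟨?_, ?_, ?_⟩
  · -- (1) openness
    have h0 : (((Aplus.map γ).topologicalClosure : Subring (UniformSpace.Completion A)) :
        Set (UniformSpace.Completion A)) ∈ 𝓝 (0 : UniformSpace.Completion A) := by
      rw [hBcoe]
      have := hdi.closure_image_mem_nhds (hopen.mem_nhds (zero_mem Aplus))
      rwa [map_zero] at this
    have := AddSubgroup.isOpen_of_mem_nhds (Aplus.map γ).topologicalClosure.toAddSubgroup
      (by rw [Subring.coe_toAddSubgroup]; exact h0)
    rwa [Subring.coe_toAddSubgroup] at this
  · -- (2) power-boundedness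
    intro b hb
    rw [hBcoe] at hb
    intro U hU
    obtain ⟨t, ht, hWtU⟩ := hWsub U hU
    have hnb : {y : UniformSpace.Completion A | b - y ∈ W 1} ∈ 𝓝 b := by
      have hc : Continuous fun y : UniformSpace.Completion A => b - y :=
        continuous_const.sub continuous_id
      refine hc.continuousAt.preimage_mem_nhds ?_
      simpa using hWmem 1 le_rfl
    obtain ⟨y, hy1, a, ha, rfl⟩ := mem_closure_iff_nhds.mp hb _ hnb
    set w : UniformSpace.Completion A := b - γ a with hwdef
    have hw : w ∈ W 1 := hy1
    have hb' : b = γ a + w := by rw [hwdef]; ring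
    obtain ⟨V, hV, hVa⟩ := hpb ha (S t) (hSmem t ht)
    obtain ⟨s₀, hs₀, hs₀V⟩ := hSsub V hV
    set s := max s₀ t with hsdef
    have hs1 : 1 ≤ s := le_trans ht (le_max_right _ _)
    have hkey : ∀ j : ℕ, ∀ v ∈ S s, v * a ^ j ∈ S t := by
      intro j v hv
      cases j with
      | zero => simpa using hSmono s t (le_max_right _ _) hv
      | succ j =>
        exact hVa v (hs₀V (hSmono s s₀ (le_max_left _ _) hv)) _
          ⟨j + 1, Nat.succ_le_succ (Nat.zero_le _), rfl⟩
    have hkeyW : ∀ j : ℕ, ∀ x ∈ W s, x * (γ a) ^ j ∈ W t := by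
      intro j x hx
      have := hWmulg (a ^ j) s t (hkey j) x hx
      rwa [map_pow] at this
    have hwpow : ∀ k : ℕ, 1 ≤ k → w ^ k ∈ W 1 := by
      intro k hk
      induction k with
      | zero => omega
      | succ k ih =>
        rcases Nat.eq_or_lt_of_le hk with h1 | h1
        · rw [← h1, pow_one]; exact hw
        · have hk1 : 1 ≤ k := by omega
          have := hWmul 1 1 (w ^ k) (ih hk1) w hw
          rw [← pow_succ] at this
          exact hWmono 2 1 (by norm_num) this
    obtain ⟨Gt, hGt⟩ := hWgrp t
    have hmain : ∀ n : ℕ, 1 ≤ n → ∀ x ∈ W s, x * b ^ n ∈ W t := by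
      intro n hn x hx
      rw [hb', add_pow, Finset.mul_sum]
      rw [← hGt]
      refine AddSubgroup.sum_mem Gt ?_
      intro j hj
      have hterm : ∀ u : UniformSpace.Completion A, u ∈ W t → u ∈ Gt := fun u hu => by
        rw [← SetLike.mem_coe, hGt]; exact hu
      have h1 : x * (γ a) ^ j ∈ W t := hkeyW j x hx
      have h2 : x * (γ a) ^ j * w ^ (n - j) ∈ W t := by
        rcases Nat.eq_zero_or_pos (n - j) with h0 | hpos
        · rw [h0, pow_zero, mul_one]; exact h1
        · have := hWmul t 1 _ h1 _ (hwpow _ hpos)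
          exact hWmono (t + 1) t (Nat.le_succ t) this
      have hre : x * ((γ a) ^ j * w ^ (n - j) * (n.choose j : UniformSpace.Completion A))
          = (n.choose j) • (x * (γ a) ^ j * w ^ (n - j)) := by
        rw [nsmul_eq_mul]; ring
      rw [hre]
      exact AddSubgroup.nsmul_mem Gt (hterm _ h2) _
    refine ⟨W s, hWmem s hs1, ?_⟩
    rintro v hv el ⟨n, hn, rfl⟩
    exact hWtU (hmain n hn v hv)
  · -- (3) integrally closed
    intro x hx
    obtain ⟨p, hpm, hpe⟩ := hx
    set n := p.natDegree with hndef
    set c : ℕ → UniformSpace.Completion A := fun i =>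
      ((p.coeff i : (Aplus.map γ).topologicalClosure) : UniformSpace.Completion A) with hcdef
    have heq : x ^ n + ∑ i ∈ Finset.range n, c i * x ^ i = 0 := by
      rw [Polynomial.eval₂_eq_sum_range, Finset.sum_range_succ] at hpe
      have hlc : p.coeff n = 1 := hpm.coeff_natDegree
      rw [hlc, map_one, one_mul] at hpe
      rw [add_comm]
      convert hpe using 2
      rfl
    rcases Nat.eq_zero_or_pos n with hn0 | hn1
    · have h10 : (1 : UniformSpace.Completion A) = 0 := by
        simpa [hn0] using heq
      have hx0 : x = 0 := by
        calc x = x * 1 := by ring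
        _ = x * 0 := by rw [h10]
        _ = 0 := by ring
      rw [hx0]; exact zero_mem _
    obtain ⟨k, hk, hkA⟩ := hSsub (Aplus : Set A) (hopen.mem_nhds (zero_mem Aplus))
    rw [← SetLike.mem_coe, hBcoe, mem_closure_iff_nhds]
    intro N hN
    have hTN : (fun v : UniformSpace.Completion A => x - v) ⁻¹' N ∈
        𝓝 (0 : UniformSpace.Completion A) := by
      refine (continuous_const.sub continuous_id).continuousAt.preimage_mem_nhds ?_
      simpa using hN
    obtain ⟨s, hs, hsT⟩ := hWsub _ hTN
    set F : UniformSpace.Completion A × (ℕ → UniformSpace.Completion A) →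
        UniformSpace.Completion A :=
      fun uv => uv.1 ^ n + ∑ i ∈ Finset.range n, uv.2 i * uv.1 ^ i with hFdef
    have hFc : Continuous F := by
      apply Continuous.add
      · exact continuous_fst.pow n
      · exact continuous_finset_sum _ fun i _ =>
          ((continuous_apply i).comp continuous_snd).mul (continuous_fst.pow i)
    have hF0 : F (x, c) = 0 := heq
    have hpre : F ⁻¹' (W k) ∈ 𝓝 ((x, c) :
        UniformSpace.Completion A × (ℕ → UniformSpace.Completion A)) := by
      refine hFc.continuousAt.preimage_mem_nhds ?_
      rw [hF0]; exact hWmem k hk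
    rw [mem_nhds_prod_iff] at hpre
    obtain ⟨N₀, hN₀, N₁, hN₁, hsubP⟩ := hpre
    rw [nhds_pi, Filter.mem_pi] at hN₁
    obtain ⟨I, hIfin, t, ht, hIt⟩ := hN₁
    have hchoose : ∀ i : ℕ, ∃ a : A, a ∈ Aplus ∧ γ a ∈ t i := by
      intro i
      have hci : c i ∈ closure (⇑γ '' (Aplus : Set A)) := by
        rw [← hBcoe]; exact (p.coeff i).2
      obtain ⟨y, hy, a, ha, rfl⟩ := mem_closure_iff_nhds.mp hci (t i) (ht i)
      exact ⟨a, ha, hy⟩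
    choose a haA hat using hchoose
    have hQ : N₀ ∩ {u : UniformSpace.Completion A | x - u ∈ W s} ∈ 𝓝 x := by
      refine Filter.inter_mem hN₀ ?_
      refine (continuous_const.sub continuous_id).continuousAt.preimage_mem_nhds ?_
      simpa using hWmem s hs
    obtain ⟨u, huQ, y, rfl⟩ := mem_closure_iff_nhds.mp (hdr x) _ hQ
    have hP : (γ y, fun i => γ (a i)) ∈ N₀ ×ˢ N₁ := by
      refine ⟨huQ.1, hIt ?_⟩
      intro i _
      exact hat i
    have hFP : F (γ y, fun i => γ (a i)) ∈ W k := hsubP hP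
    set z : A := y ^ n + ∑ i ∈ Finset.range n, a i * y ^ i with hzdef
    have hγz : γ z = F (γ y, fun i => γ (a i)) := by
      rw [hzdef, hFdef]
      push_cast [map_add, map_pow, map_sum, map_mul]
      rfl
    have hz : γ z ∈ W k := by rw [hγz]; exact hFP
    have hzA : z ∈ Aplus := by
      have h1 : z ∈ ⇑γ ⁻¹' closure (⇑γ '' S k) := hz
      rw [← hdi.toIsInducing.closure_eq_preimage_closure_image] at h1
      have hclosed : IsClosed (Aplus : Set A) := by
        have := AddSubgroup.isClosed_of_isOpen Aplus.toAddSubgroup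
          (by rw [Subring.coe_toAddSubgroup]; exact hopen)
        rwa [Subring.coe_toAddSubgroup] at this
      exact closure_minimal hkA hclosed h1
    set q : Polynomial Aplus := Polynomial.X ^ n +
      ((∑ i ∈ Finset.range n, Polynomial.C (⟨a i, haA i⟩ : Aplus) * Polynomial.X ^ i) -
        Polynomial.C (⟨z, hzA⟩ : Aplus)) with hqdef
    have hqm : q.Monic := by
      refine Polynomial.monic_X_pow_add ?_
      refine lt_of_le_of_lt (Polynomial.degree_sub_le _ _) ?_
      rw [max_lt_iff]
      constructor
      · refine lt_of_le_of_lt (Polynomial.degree_sum_le _ _) ?_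
        rw [Finset.sup_lt_iff (by exact_mod_cast WithBot.bot_lt_coe n)]
        intro i hi
        exact lt_of_le_of_lt (Polynomial.degree_C_mul_X_pow_le _ _)
          (by exact_mod_cast Finset.mem_range.mp hi)
      · exact lt_of_le_of_lt Polynomial.degree_C_le (by exact_mod_cast hn1)
    have hqe : Polynomial.eval₂ (algebraMap Aplus A) y q = 0 := by
      rw [hqdef]
      simp only [Polynomial.eval₂_add, Polynomial.eval₂_sub, Polynomial.eval₂_pow,
        Polynomial.eval₂_X, Polynomial.eval₂_finset_sum, Polynomial.eval₂_mul, Polynomial.eval₂_C]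
      have halg : ∀ u : Aplus, algebraMap Aplus A u = (u : A) := fun u => rfl
      simp only [halg]
      rw [hzdef]
      ring
    have hyA : y ∈ Aplus := hic y ⟨q, hqm, hqe⟩
    refine ⟨γ y, ?_, ⟨y, hyA, rfl⟩⟩
    have := hsT huQ.2
    simpa [sub_sub_cancel] using this
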